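/- Let φ : Mₙ(ℂ) → Mₘ(ℂ) be a linear map, continuous in the operator norm, whose restriction to projections is an ortho-homomorphism: φ(p) is a projection for every projection p, and for orthogonal projections p ⊥ q one has φ(p) ⊥ φ(q) and φ(p+q) = φ(p) + φ(q). Then φ is a Jordan *-homomorphism. -/

import Mathlib

open Matrix ComplexOrder


lemma sum_proj_sq {n m : ℕ} (c : Fin n → ℂ) (Q : Fin n → Matrix (Fin m) (Fin m) ℂ)
    (h : ∀ j k, Q j * Q k = if j = k then Q j else 0) :
    (∑ j, c j • Q j) * (∑ j, c j • Q j) = ∑ j, (c j * c j) • Q j := by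
  rw [Finset.sum_mul_sum]
  simp only [Matrix.smul_mul, Matrix.mul_smul, h, smul_ite, smul_zero, smul_smul]
  simp [Finset.sum_ite_eq', mul_comm]

lemma herm_key {n m : ℕ}
    (φ : Matrix (Fin n) (Fin n) ℂ →ₗ[ℂ] Matrix (Fin m) (Fin m) ℂ)
    (hproj : ∀ p : Matrix (Fin n) (Fin n) ℂ, p * p = p → pᴴ = p →
      φ p * φ p = φ p ∧ (φ p)ᴴ = φ p)
    (horth : ∀ p q : Matrix (Fin n) (Fin n) ℂ, p * p = p → pᴴ = p →
      q * q = q → qᴴ = q → p * q = 0 →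
      φ p * φ q = 0 ∧ φ (p + q) = φ p + φ q)
    (x : Matrix (Fin n) (Fin n) ℂ) (hx : xᴴ = x) :
    (φ x)ᴴ = φ x ∧ φ (x * x) = φ x * φ x := by
  have hxh : x.IsHermitian := hx
  set U : Matrix (Fin n) (Fin n) ℂ := (hxh.eigenvectorUnitary : Matrix (Fin n) (Fin n) ℂ) with hU
  have hUU : Uᴴ * U = 1 := by
    simpa [star_eq_conjTranspose] using (Matrix.mem_unitaryGroup_iff').mp hxh.eigenvectorUnitary.2
  set lam : Fin n → ℝ := hxh.eigenvalues with hlam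
  set Q : Fin n → Matrix (Fin n) (Fin n) ℂ :=
    fun j => U * Matrix.single j j 1 * Uᴴ with hQdef
  set P : Fin n → Matrix (Fin m) (Fin m) ℂ := fun j => φ (Q j) with hP
  have hQ2 : ∀ j, Q j * Q j = Q j := by
    intro j
    calc Q j * Q j
        = U * (Matrix.single j j 1 * ((Uᴴ * U) * Matrix.single j j 1)) * Uᴴ := by
          simp only [hQdef]; noncomm_ring
      _ = Q j := by
          rw [hUU, one_mul, Matrix.single_mul_single_same, mul_one]
  have hQH : ∀ j, (Q j)ᴴ = Q j := by
    intro j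
    have h1 : (Matrix.single j j (1:ℂ))ᴴ = Matrix.single j j 1 := by
      ext i k
      simp [Matrix.single, conjTranspose_apply, and_comm]
    simp [hQdef, Matrix.conjTranspose_mul, Matrix.mul_assoc, h1]
  have hQorth : ∀ j k, j ≠ k → Q j * Q k = 0 := by
    intro j k hjk
    calc Q j * Q k
        = U * (Matrix.single j j 1 * ((Uᴴ * U) * Matrix.single k k 1)) * Uᴴ := by
          simp only [hQdef]; noncomm_ring
      _ = 0 := by
          rw [hUU, one_mul, Matrix.single_mul_single_of_ne (1:ℂ) j j k hjk (1:ℂ)]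
          simp
  have hQif : ∀ j k, Q j * Q k = if j = k then Q j else 0 := by
    intro j k
    by_cases h : j = k
    · subst h; simp [hQ2]
    · simp [h, hQorth j k h]
  have hP2 : ∀ j, P j * P j = P j := fun j => (hproj _ (hQ2 j) (hQH j)).1
  have hPH : ∀ j, (P j)ᴴ = P j := fun j => (hproj _ (hQ2 j) (hQH j)).2
  have hPif : ∀ j k, P j * P k = if j = k then P j else 0 := by
    intro j k
    by_cases h : j = k
    · subst h; simp [hP2]
    · rw [if_neg h]; exact (horth _ _ (hQ2 j) (hQH j) (hQ2 k) (hQH k) (hQorth j k h)).1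
  have hdiag : Matrix.diagonal (RCLike.ofReal ∘ lam : Fin n → ℂ)
      = ∑ j, (lam j : ℂ) • Matrix.single j j 1 := by
    ext i k
    simp only [Matrix.sum_apply, Matrix.smul_apply, Matrix.single, of_apply, smul_ite,
      smul_eq_mul, mul_one, mul_zero, diagonal_apply]
    by_cases h : i = k
    · subst h; simp
    · simp [h, fun j => show ¬(j = i ∧ j = k) from fun ⟨h1, h2⟩ => h (h1 ▸ h2 ▸ rfl)]
  have hxdecomp : x = ∑ j, (lam j : ℂ) • Q j := by
    conv_lhs => rw [hxh.spectral_theorem]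
    rw [hdiag]
    rw [Unitary.conjStarAlgAut_apply]
    rw [Finset.mul_sum, Finset.sum_mul]
    refine Finset.sum_congr rfl fun i _ => ?_
    simp only [hQdef, star_eq_conjTranspose, ← hU, Matrix.mul_smul, Matrix.smul_mul]
  have hφx : φ x = ∑ j, (lam j : ℂ) • P j := by
    rw [hxdecomp, map_sum]
    simp [hP]
  constructor
  · rw [hφx, conjTranspose_sum]
    refine Finset.sum_congr rfl fun j _ => ?_
    rw [conjTranspose_smul, hPH]
    congr 1
    simp [Complex.star_def, Complex.conj_ofReal]
  · have hxx : x * x = ∑ j, ((lam j : ℂ) * (lam j : ℂ)) • Q j := by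
      conv_lhs => rw [hxdecomp]
      exact sum_proj_sq _ _ hQif
    rw [hxx, map_sum, hφx, sum_proj_sq _ _ hPif]
    simp [hP]


/-- A norm-continuous linear map on a matrix algebra whose restriction to
projections is an ortho-homomorphism is a Jordan *-homomorphism. -/
theorem stmt_13 {n m : ℕ}
    (φ : Matrix (Fin n) (Fin n) ℂ →ₗ[ℂ] Matrix (Fin m) (Fin m) ℂ)
    (hcont : Continuous fun x => φ x)
    (hproj : ∀ p : Matrix (Fin n) (Fin n) ℂ, p * p = p → pᴴ = p →
      φ p * φ p = φ p ∧ (φ p)ᴴ = φ p)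
    (horth : ∀ p q : Matrix (Fin n) (Fin n) ℂ, p * p = p → pᴴ = p →
      q * q = q → qᴴ = q → p * q = 0 →
      φ p * φ q = 0 ∧ φ (p + q) = φ p + φ q) :
    (∀ x, φ xᴴ = (φ x)ᴴ) ∧ (∀ x, φ (x * x) = φ x * φ x) := by
  have key : ∀ x : Matrix (Fin n) (Fin n) ℂ, xᴴ = x →
      (φ x)ᴴ = φ x ∧ φ (x * x) = φ x * φ x :=
    fun x hx => herm_key φ hproj horth x hx
  -- Jordan property for hermitian pairs
  have hj : ∀ a b : Matrix (Fin n) (Fin n) ℂ, aᴴ = a → bᴴ = b →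
      φ (a * b) + φ (b * a) = φ a * φ b + φ b * φ a := by
    intro a b ha hb
    have h1 := (key (a + b) (by rw [conjTranspose_add, ha, hb])).2
    have h2 := (key a ha).2
    have h3 := (key b hb).2
    have E : φ (a*a) + φ (a*b) + φ (b*a) + φ (b*b)
        = φ a * φ a + φ a * φ b + φ b * φ a + φ b * φ b := by
      have e1 : (a + b) * (a + b) = a*a + a*b + b*a + b*b := by noncomm_ring
      have e2 : (φ a + φ b) * (φ a + φ b)
          = φ a * φ a + φ a * φ b + φ b * φ a + φ b * φ b := by noncomm_ring
      rw [e1] at h1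
      simp only [map_add] at h1
      rw [← e2, h1]
    calc φ (a*b) + φ (b*a)
        = (φ (a*a) + φ (a*b) + φ (b*a) + φ (b*b)) - φ (a*a) - φ (b*b) := by abel
      _ = (φ a * φ a + φ a * φ b + φ b * φ a + φ b * φ b) - φ (a*a) - φ (b*b) := by rw [E]
      _ = φ a * φ b + φ b * φ a := by rw [h2, h3]; abel
  -- decomposition x = a + i b
  have decomp : ∀ x : Matrix (Fin n) (Fin n) ℂ,
      ∃ a b : Matrix (Fin n) (Fin n) ℂ, aᴴ = a ∧ bᴴ = b ∧
        x = a + Complex.I • b ∧ xᴴ = a - Complex.I • b := by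
    intro x
    refine ⟨((1:ℂ)/2) • (x + xᴴ), (Complex.I/2) • (xᴴ - x), ?_, ?_, ?_, ?_⟩
    · rw [conjTranspose_smul, conjTranspose_add, conjTranspose_conjTranspose]
      rw [show (star ((1:ℂ)/2)) = (1:ℂ)/2 by norm_num [Complex.star_def]]
      rw [add_comm]
    · rw [conjTranspose_smul, conjTranspose_sub, conjTranspose_conjTranspose]
      rw [show (star (Complex.I/2)) = -(Complex.I/2) by
        simp [Complex.star_def, Complex.conj_I, neg_div]]
      rw [neg_smul, smul_sub, smul_sub]
      abel
    · have : Complex.I • ((Complex.I/2) • (xᴴ - x)) = (-(1:ℂ)/2) • (xᴴ - x) := by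
        rw [smul_smul]
        congr 1
        rw [mul_div_assoc', Complex.I_mul_I]
      rw [this]
      module
    · have : Complex.I • ((Complex.I/2) • (xᴴ - x)) = (-(1:ℂ)/2) • (xᴴ - x) := by
        rw [smul_smul]
        congr 1
        rw [mul_div_assoc', Complex.I_mul_I]
      rw [this]
      module
  constructor
  · intro x
    obtain ⟨a, b, ha, hb, hx, hxH⟩ := decomp x
    rw [hxH, map_sub, LinearMap.map_smul]
    conv_rhs => rw [hx]
    rw [map_add, LinearMap.map_smul, conjTranspose_add, conjTranspose_smul,
      (key a ha).1, (key b hb).1]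
    rw [show (star Complex.I) = -Complex.I by simp [Complex.star_def, Complex.conj_I]]
    rw [neg_smul]
    abel
  · intro x
    obtain ⟨a, b, ha, hb, hx, -⟩ := decomp x
    have hxx : x * x = a*a - b*b + Complex.I • (a*b + b*a) := by
      rw [hx]
      simp only [add_mul, mul_add, smul_mul_assoc, mul_smul_comm, smul_smul,
        Complex.I_mul_I, neg_smul, one_smul, smul_add]
      abel
    have hφ2 : φ x * φ x = φ a * φ a - φ b * φ b
        + Complex.I • (φ a * φ b + φ b * φ a) := by
      rw [hx, map_add, LinearMap.map_smul]
      simp only [add_mul, mul_add, smul_mul_assoc, mul_smul_comm, smul_smul,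
        Complex.I_mul_I, neg_smul, one_smul, smul_add]
      abel
    rw [hxx, map_add, map_sub, LinearMap.map_smul, map_add, hφ2,
      (key a ha).2, (key b hb).2, hj a b ha hb]
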